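/- Let V be a real topological vector space and C ⊆ V a convex set. Let a, b ∈ C, let λ ∈ (0,1), and set z = (1−λ)a + λb. Suppose there are cones Γ_a, Γ_z ⊆ V and neighborhoods U_a of a and U_z of z with C ∩ U_a = (a + Γ_a) ∩ U_a and C ∩ U_z = (z + Γ_z) ∩ U_z. If v ∈ Γ_a and −v ∈ Γ_a, then v ∈ Γ_z and −v ∈ Γ_z; i.e., every line contained in the local cone at an endpoint of a segment in C is contained in the local cone at each inner point of the segment. -/

import Mathlib

open Pointwise

/-- A cone in a real vector space: contains `0` and is closed under
multiplication by nonnegative real scalars. -/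
def IsCone {V : Type*} [AddCommGroup V] [Module ℝ V] (Γ : Set V) : Prop :=
  (0 : V) ∈ Γ ∧ ∀ r : ℝ, 0 ≤ r → ∀ v ∈ Γ, r • v ∈ Γ

/-- Every line contained in the local cone at an endpoint of a segment inside a convex
set is contained in the local cone at each inner point of the segment. -/
theorem line_in_local_cone_of_inner_point
    {V : Type*} [AddCommGroup V] [Module ℝ V] [TopologicalSpace V]
    [IsTopologicalAddGroup V] [ContinuousSMul ℝ V]
    (C : Set V) (hconv : Convex ℝ C)
    (a b : V) (ha : a ∈ C) (hb : b ∈ C)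
    (lam : ℝ) (hlam0 : 0 < lam) (hlam1 : lam < 1)
    (z : V) (hz : z = (1 - lam) • a + lam • b)
    (Γa Γz : Set V) (hΓa : IsCone Γa) (hΓz : IsCone Γz)
    (Ua : Set V) (hUa : Ua ∈ nhds a) (hlocala : C ∩ Ua = (a +ᵥ Γa) ∩ Ua)
    (Uz : Set V) (hUz : Uz ∈ nhds z) (hlocalz : C ∩ Uz = (z +ᵥ Γz) ∩ Uz)
    (v : V) (hv : v ∈ Γa) (hv' : -v ∈ Γa) :
    v ∈ Γz ∧ -v ∈ Γz := by
  have key : ∀ w ∈ Γa, w ∈ Γz := by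
    intro w hw
    -- the map t ↦ a + t • w is continuous at 0 with value a
    have hfa : Filter.Tendsto (fun t : ℝ => a + t • w) (nhds 0) (nhds a) := by
      have : Filter.Tendsto (fun t : ℝ => a + t • w) (nhds 0) (nhds (a + (0:ℝ) • w)) := by
        apply Filter.Tendsto.add tendsto_const_nhds
        exact (continuous_id.smul continuous_const).tendsto 0
      simpa using this
    have hfz : Filter.Tendsto (fun t : ℝ => z + ((1 - lam) * t) • w) (nhds 0) (nhds z) := by
      have : Filter.Tendsto (fun t : ℝ => z + ((1 - lam) * t) • w) (nhds 0)
          (nhds (z + ((1 - lam) * (0:ℝ)) • w)) := by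
        apply Filter.Tendsto.add tendsto_const_nhds
        exact ((continuous_const.mul continuous_id).smul continuous_const).tendsto 0
      simpa using this
    have hS : {t : ℝ | a + t • w ∈ Ua} ∩ {t : ℝ | z + ((1 - lam) * t) • w ∈ Uz} ∈ nhds (0:ℝ) :=
      Filter.inter_mem (hfa hUa) (hfz hUz)
    obtain ⟨ε, hε, hball⟩ := Metric.mem_nhds_iff.mp hS
    set t : ℝ := ε / 2 with ht
    have htpos : 0 < t := by positivity
    have htmem : t ∈ Metric.ball (0:ℝ) ε := by
      simp only [Metric.mem_ball, Real.dist_eq, sub_zero]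
      rw [abs_of_pos htpos]
      linarith
    obtain ⟨hta, htz⟩ := hball htmem
    -- a + t • w ∈ C
    have haC : a + t • w ∈ C := by
      have : a + t • w ∈ (a +ᵥ Γa) ∩ Ua := by
        refine ⟨⟨t • w, hΓa.2 t htpos.le w hw, rfl⟩, hta⟩
      rw [← hlocala] at this
      exact this.1
    -- convex combination
    have hzC : z + ((1 - lam) * t) • w ∈ C := by
      have hcomb := hconv haC hb (by linarith : (0:ℝ) ≤ 1 - lam) hlam0.le (by ring)
      have heq : (1 - lam) • (a + t • w) + lam • b = z + ((1 - lam) * t) • w := by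
        rw [hz, smul_add, mul_smul]
        abel
      rwa [heq] at hcomb
    have : z + ((1 - lam) * t) • w ∈ (z +ᵥ Γz) ∩ Uz := by
      rw [← hlocalz]; exact ⟨hzC, htz⟩
    obtain ⟨⟨u, hu, huz⟩, -⟩ := this
    have hwu : ((1 - lam) * t) • w = u := by
      have h2 : z + u = z + ((1 - lam) * t) • w := huz
      exact (add_left_cancel h2).symm
    have hc : (0:ℝ) < (1 - lam) * t := by
      have : (0:ℝ) < 1 - lam := by linarith
      positivity
    have := hΓz.2 ((1 - lam) * t)⁻¹ (by positivity) u hu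
    rw [← hwu, ← mul_smul, inv_mul_cancel₀ hc.ne', one_smul] at this
    exact this
  exact ⟨key v hv, key (-v) hv'⟩
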